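/- For the Kodaira model, the complex structure is integrable: μ(IX, IY) − μ(X, Y) = I(μ(IX, Y) + μ(X, IY)) for all X, Y ∈ ℝ⁴ (equivalently, the Nijenhuis tensor N^μ vanishes identically), so the associated locally homogeneous almost-Hermitian structures on the primary Kodaira surface are Hermitian. -/
import Mathlib


open scoped RealInnerProductSpace

/-- The standard basis of `ℝ⁴`. -/
noncomputable def e4 (i : Fin 4) : EuclideanSpace ℝ (Fin 4) :=
  EuclideanSpace.single i 1

/-- For the Kodaira model, the complex structure is integrable:
`μ(IX, IY) − μ(X, Y) = I(μ(IX, Y) + μ(X, IY))` for all `X, Y` (equivalently, the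
Nijenhuis tensor `N^μ` vanishes identically), so the associated locally homogeneous
almost-Hermitian structures on the primary Kodaira surface are Hermitian. -/
theorem stmt_15 (r v α β : ℝ) (hr : 0 < r) (hv : 0 < v)
    (μ : EuclideanSpace ℝ (Fin 4) →ₗ[ℝ]
      EuclideanSpace ℝ (Fin 4) →ₗ[ℝ] EuclideanSpace ℝ (Fin 4))
    (hμalt : ∀ X, μ X X = 0)
    (h01 : μ (e4 0) (e4 1) =
      (α / r) • e4 0 - (β / r) • e4 1 - (v / r ^ 2) • e4 3)
    (h02 : μ (e4 0) (e4 2) =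
      -(α ^ 2 / v) • e4 0 + (α * β / v) • e4 1 + (α / r) • e4 3)
    (h03 : μ (e4 0) (e4 3) =
      -(α * β / v) • e4 0 + (β ^ 2 / v) • e4 1 + (β / r) • e4 3)
    (h12 : μ (e4 1) (e4 2) =
      (α * β / v) • e4 0 - (β ^ 2 / v) • e4 1 - (β / r) • e4 3)
    (h13 : μ (e4 1) (e4 3) =
      -(α ^ 2 / v) • e4 0 + (α * β / v) • e4 1 + (α / r) • e4 3)
    (h23 : μ (e4 2) (e4 3) =
      ((α ^ 2 + β ^ 2) * α * r / v ^ 2) • e4 0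
        - ((α ^ 2 + β ^ 2) * β * r / v ^ 2) • e4 1
        - ((α ^ 2 + β ^ 2) / v) • e4 3)
    (I : EuclideanSpace ℝ (Fin 4) →ₗ[ℝ] EuclideanSpace ℝ (Fin 4))
    (hI0 : I (e4 0) = e4 1) (hI1 : I (e4 1) = -e4 0)
    (hI2 : I (e4 2) = e4 3) (hI3 : I (e4 3) = -e4 2) :
    ∀ X Y : EuclideanSpace ℝ (Fin 4),
      μ (I X) (I Y) - μ X Y = I (μ (I X) Y + μ X (I Y)) := by
  have hanti : ∀ X Y, μ X Y = -μ Y X := by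
    intro X Y
    have h := hμalt (X + Y)
    simp only [map_add, LinearMap.add_apply, hμalt, zero_add, add_zero] at h
    rw [eq_neg_iff_add_eq_zero, add_comm]
    exact h
  have h10 := hanti (e4 1) (e4 0); rw [h01] at h10
  have h20 := hanti (e4 2) (e4 0); rw [h02] at h20
  have h30 := hanti (e4 3) (e4 0); rw [h03] at h30
  have h21 := hanti (e4 2) (e4 1); rw [h12] at h21
  have h31 := hanti (e4 3) (e4 1); rw [h13] at h31
  have h32 := hanti (e4 3) (e4 2); rw [h23] at h32
  have key : ∀ i j : Fin 4,
      μ (I (e4 i)) (I (e4 j)) - μ (e4 i) (e4 j)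
        - I (μ (I (e4 i)) (e4 j)) - I (μ (e4 i) (I (e4 j))) = 0 := by
    intro i j
    fin_cases i <;> fin_cases j <;>
      · beta_reduce
        simp only [Fin.zero_eta, Fin.mk_one,
          show (⟨2, by omega⟩ : Fin 4) = 2 from rfl,
          show (⟨3, by omega⟩ : Fin 4) = 3 from rfl,
          hI0, hI1, hI2, hI3, map_neg, LinearMap.neg_apply, hμalt,
          h01, h02, h03, h12, h13, h23, h10, h20, h30, h21, h31, h32,
          map_add, map_sub, map_smul, map_zero, neg_neg, neg_zero,
          smul_neg, neg_smul]
        module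
  set N : EuclideanSpace ℝ (Fin 4) →ₗ[ℝ]
      EuclideanSpace ℝ (Fin 4) →ₗ[ℝ] EuclideanSpace ℝ (Fin 4) :=
    LinearMap.mk₂ ℝ
      (fun X Y => μ (I X) (I Y) - μ X Y - I (μ (I X) Y) - I (μ X (I Y)))
      (by intro X₁ X₂ Y
          simp only [map_add, LinearMap.add_apply]
          abel)
      (by intro c X Y
          simp only [map_smul, LinearMap.smul_apply, smul_sub]
          try abel)
      (by intro X Y₁ Y₂
          simp only [map_add, LinearMap.add_apply]
          abel)
      (by intro X c Y
          simp only [map_smul, LinearMap.smul_apply, smul_sub]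
          try abel)
    with hNdef
  have hN : N = 0 := by
    apply (EuclideanSpace.basisFun (Fin 4) ℝ).toBasis.ext
    intro i
    apply (EuclideanSpace.basisFun (Fin 4) ℝ).toBasis.ext
    intro j
    have hb : ∀ k : Fin 4,
        ((EuclideanSpace.basisFun (Fin 4) ℝ).toBasis : Fin 4 → EuclideanSpace ℝ (Fin 4)) k
          = e4 k := by
      intro k
      rw [OrthonormalBasis.coe_toBasis]
      simp [EuclideanSpace.basisFun_apply, e4]
    simp only [hb, hNdef, LinearMap.mk₂_apply, LinearMap.zero_apply]
    exact key i j
  intro X Y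
  have h0 : N X Y = 0 := by rw [hN]; rfl
  rw [hNdef] at h0
  simp only [LinearMap.mk₂_apply] at h0
  have h1 : μ (I X) (I Y) - μ X Y = I (μ (I X) Y) + I (μ X (I Y)) := by
    have h2 : μ (I X) (I Y) - μ X Y - (I (μ (I X) Y) + I (μ X (I Y))) = 0 := by
      rw [← h0]; abel
    exact sub_eq_zero.mp h2
  rw [h1, map_add]
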